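/- If R is an out-ray and S is an in-ray with common root such that R and S are knit, then there exists a sequence (C_i)_{i∈ℕ} of directed cycles such that for all j ≠ k ∈ ℕ the intersection C_j ∩ C_k is a directed path if |j − k| = 1 and is empty otherwise, and ⋃_{i∈ℕ} C_i = R ∪ S. -/

import Mathlib

/-!
Common definitions: directed graphs as vertex/edge sets, directed paths and
walks, rays, arborescences, tree-like models and butterfly minors, laced
paths, knit rays, and the shapes (dominated directed rays, stars, combs,
chains of triangles) from the paper.
-/

universe u

/-- A directed graph on an ambient vertex type `V`, given by a set of vertices
and a set of directed edges (ordered pairs of vertices). -/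
structure DGraph (V : Type u) where
  verts : Set V
  edges : Set (V × V)

namespace DGraph

variable {V : Type u}

instance : Union (DGraph V) := ⟨fun G H => ⟨G.verts ∪ H.verts, G.edges ∪ H.edges⟩⟩
instance : Inter (DGraph V) := ⟨fun G H => ⟨G.verts ∩ H.verts, G.edges ∩ H.edges⟩⟩
instance : HasSubset (DGraph V) := ⟨fun H G => H.verts ⊆ G.verts ∧ H.edges ⊆ G.edges⟩
instance : EmptyCollection (DGraph V) := ⟨⟨∅, ∅⟩⟩

/-- The union of a family of directed graphs. -/
def iUnion {ι : Type} (f : ι → DGraph V) : DGraph V :=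
  ⟨⋃ i, (f i).verts, ⋃ i, (f i).edges⟩

/-- The directed graph obtained by reversing the orientation of every edge. -/
def reverse (G : DGraph V) : DGraph V := ⟨G.verts, {e | (e.2, e.1) ∈ G.edges}⟩

/-- The directed graph consisting of a single vertex and no edges. -/
def single (v : V) : DGraph V := ⟨{v}, ∅⟩

/-- Two vertices joined by both directed edges. -/
def linkBoth (a b : V) : DGraph V := ⟨{a, b}, {(a, b), (b, a)}⟩

/-- A directed triangle (directed cycle of length 3) on `a, b, c`. -/
def triangle (a b c : V) : DGraph V := ⟨{a, b, c}, {(a, b), (b, c), (c, a)}⟩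

/-- The directed graph of a list of vertices with its consecutive edges. -/
def ofList (l : List V) : DGraph V := ⟨{v | v ∈ l}, {e | e ∈ l.zip l.tail}⟩

/-- `𝒟(P)` for the (undirected) path `P` given by the list `l`:
the double path on `l`. -/
def doubleOfList (l : List V) : DGraph V := ofList l ∪ (ofList l).reverse

/-- The directed cycle through the vertices of `l` in order. -/
def cycleOfList (l : List V) : DGraph V :=
  ⟨{v | v ∈ l}, {e | e ∈ l.zip (l.tail ++ l.take 1)}⟩

/-- `G` is a directed cycle. -/
def IsDirectedCycle (G : DGraph V) : Prop :=
  ∃ l : List V, l.Nodup ∧ 2 ≤ l.length ∧ G = cycleOfList l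

/-- The out-oriented ray with vertices `f 0, f 1, …`, rooted at `f 0`. -/
def outRay (f : ℕ → V) : DGraph V :=
  ⟨Set.range f, {e | ∃ n, e = (f n, f (n + 1))}⟩

/-- The in-oriented ray with vertices `f 0, f 1, …`, rooted at `f 0`. -/
def inRay (f : ℕ → V) : DGraph V :=
  ⟨Set.range f, {e | ∃ n, e = (f (n + 1), f n)}⟩

/-- `𝒟(R)` for the undirected ray `R` with vertices `f 0, f 1, …`. -/
def doubleRay (f : ℕ → V) : DGraph V := outRay f ∪ inRay f

/-- The dominated directed ray on an out-oriented ray: the out-oriented ray `f`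
rooted at `f 0` together with the edges `(f (n+1), f 0)`. -/
def domOutRay (f : ℕ → V) : DGraph V :=
  ⟨Set.range f, {e | ∃ n, e = (f n, f (n + 1))} ∪ {e | ∃ n, e = (f (n + 1), f 0)}⟩

/-- The dominated directed ray on an in-oriented ray: the in-oriented ray `f`
rooted at `f 0` together with the edges `(f 0, f (n+1))`. -/
def domInRay (f : ℕ → V) : DGraph V :=
  ⟨Set.range f, {e | ∃ n, e = (f (n + 1), f n)} ∪ {e | ∃ n, e = (f 0, f (n + 1))}⟩

/-- `G` is a dominated directed ray. -/
def IsDominatedDirectedRay (G : DGraph V) : Prop :=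
  ∃ f : ℕ → V, Function.Injective f ∧ (G = domOutRay f ∨ G = domInRay f)

/-- The internal vertices of a path or walk given as a list. -/
def internals (l : List V) : List V := l.tail.dropLast

/-- `l` is a directed path in `G`. -/
def IsPath (G : DGraph V) (l : List V) : Prop :=
  l ≠ [] ∧ l.Nodup ∧ (∀ v ∈ l, v ∈ G.verts) ∧ ∀ e ∈ l.zip l.tail, e ∈ G.edges

/-- `l` is a directed path in `G` with startvertex `a` and endvertex `b`. -/
def IsPathFrom (G : DGraph V) (a b : V) (l : List V) : Prop :=
  IsPath G l ∧ l.head? = some a ∧ l.getLast? = some b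

/-- There is a directed `a`–`b` path in `G`. -/
def Reaches (G : DGraph V) (a b : V) : Prop := ∃ l, IsPathFrom G a b l

/-- `G` is strongly connected. -/
def StronglyConnected (G : DGraph V) : Prop :=
  ∀ a ∈ G.verts, ∀ b ∈ G.verts, Reaches G a b

/-- `l` is a directed `X`–`Y` path in `G`: it starts in `X`, ends in `Y` and
has no internal vertex in `X ∪ Y`. -/
def IsXYPath (G : DGraph V) (X Y : Set V) (l : List V) : Prop :=
  IsPath G l ∧ (∃ a ∈ X, l.head? = some a) ∧ (∃ b ∈ Y, l.getLast? = some b) ∧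
    ∀ v ∈ internals l, v ∉ X ∪ Y

/-- `T` is an in-arborescence rooted at `r`: its underlying graph is a tree
and all edges are directed towards the root `r`. -/
def IsInArborescence (T : DGraph V) (r : V) : Prop :=
  r ∈ T.verts ∧ (∀ e ∈ T.edges, e.1 ∈ T.verts ∧ e.2 ∈ T.verts) ∧
  (∀ w, (r, w) ∉ T.edges) ∧ (∀ v ∈ T.verts, v ≠ r → ∃! w, (v, w) ∈ T.edges) ∧
  (∀ v ∈ T.verts, Reaches T v r)

/-- `T` is an out-arborescence rooted at `r`. -/
def IsOutArborescence (T : DGraph V) (r : V) : Prop := IsInArborescence T.reverse r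

/-- `v` is a leaf of the in-arborescence `T` rooted at `r`. -/
def IsLeafOfInArb (T : DGraph V) (r v : V) : Prop :=
  v ∈ T.verts ∧ v ≠ r ∧ ∀ u, (u, v) ∉ T.edges

/-- `v` is a leaf of the out-arborescence `T` rooted at `r`. -/
def IsLeafOfOutArb (T : DGraph V) (r v : V) : Prop := IsLeafOfInArb T.reverse r v

/-- A tree-like model of `H` in `D`; every vertex of `H` is identified with the
common root of the in- and out-arborescence of its branch set. -/
structure TreeLikeModel (D H : DGraph V) where
  bag : V → DGraph V
  tin : V → DGraph V
  tout : V → DGraph V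
  emap : V × V → V × V
  bag_sub : ∀ v ∈ H.verts, bag v ⊆ D
  bag_disjoint : ∀ v ∈ H.verts, ∀ w ∈ H.verts, v ≠ w → (bag v).verts ∩ (bag w).verts = ∅
  bag_eq : ∀ v ∈ H.verts, bag v = tin v ∪ tout v
  tin_arb : ∀ v ∈ H.verts, IsInArborescence (tin v) v
  tout_arb : ∀ v ∈ H.verts, IsOutArborescence (tout v) v
  roots_eq : ∀ v ∈ H.verts, (tin v).verts ∩ (tout v).verts = {v}
  emap_mem : ∀ e ∈ H.edges, emap e ∈ D.edges
  emap_tail : ∀ e ∈ H.edges, (emap e).1 ∈ (tout e.1).verts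
  emap_head : ∀ e ∈ H.edges, (emap e).2 ∈ (tin e.2).verts

/-- `H` is a butterfly minor of `D`. -/
def IsButterflyMinor (D H : DGraph V) : Prop := Nonempty (TreeLikeModel D H)

/-- `G` is a double path (`𝒟(P)` for an undirected path `P`) with endpoints
`a` and `b`. -/
def IsDoublePath (G : DGraph V) (a b : V) : Prop :=
  ∃ l : List V, l.Nodup ∧ l.head? = some a ∧ l.getLast? = some b ∧ G = doubleOfList l

/-- `G = 𝒟(S)` for a subdivided star `S` with infinitely many leaves, with
centre `c` and branches `q n`; `teeth` is the set of leaves of `S`. -/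
def IsDSubdividedStar (G : DGraph V) (teeth : Set V) : Prop :=
  ∃ (c : V) (q : ℕ → List V),
    (∀ n, (q n).Nodup ∧ (q n).head? = some c ∧ 2 ≤ (q n).length) ∧
    (∀ m n, m ≠ n → ∀ v, v ∈ q m → v ∈ q n → v = c) ∧
    G = iUnion (fun n => doubleOfList (q n)) ∧
    teeth = {v | ∃ n, (q n).getLast? = some v}

/-- `G` is obtained from `𝒟(S)` for a subdivided star `S` by replacing the
centre of infinite degree by a dominated directed ray. -/
def IsRayCentreStar (G : DGraph V) (teeth : Set V) : Prop :=
  ∃ (f : ℕ → V) (R : DGraph V) (g : ℕ → V) (q : ℕ → List V),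
    Function.Injective f ∧ (R = domOutRay f ∨ R = domInRay f) ∧
    (∀ n, (q n).Nodup ∧ (q n).head? = some (g n)) ∧
    (∀ n, ∀ v ∈ q n, v ∉ Set.range f) ∧
    (∀ m n, m ≠ n → ∀ v ∈ q m, v ∉ q n) ∧
    G = R ∪ iUnion (fun n => doubleOfList (q n) ∪ linkBoth (f n) (g n)) ∧
    teeth = {v | ∃ n, (q n).getLast? = some v}

/-- `G` is shaped by a star, with set of teeth `teeth`. -/
def IsShapedByStar (G : DGraph V) (teeth : Set V) : Prop :=
  (IsDominatedDirectedRay G ∧ teeth = G.verts) ∨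
  IsDSubdividedStar G teeth ∨ IsRayCentreStar G teeth

/-- `G = 𝒟(C)` for a comb `C` with spine `f`, branches `q n` attached at
`f (α n)`; `teeth` is the set of teeth of `C`. -/
def IsDComb (G : DGraph V) (teeth : Set V) : Prop :=
  ∃ (f : ℕ → V) (α : ℕ → ℕ) (q : ℕ → List V),
    Function.Injective f ∧ Function.Injective α ∧
    (∀ n, (q n).Nodup ∧ (q n).head? = some (f (α n))) ∧
    (∀ n, ∀ v ∈ (q n).tail, v ∉ Set.range f) ∧
    (∀ m n, m ≠ n → ∀ v ∈ q m, v ∉ q n) ∧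
    G = doubleRay f ∪ iUnion (fun n => doubleOfList (q n)) ∧
    teeth = {v | ∃ n, (q n).getLast? = some v}

/-- The double path on `l` together with both edges between `b` and the first
vertex of `l` (empty if `l` is empty). -/
def branchGraph (b : V) (l : List V) : DGraph V :=
  match l with
  | [] => ∅
  | h :: _ => doubleOfList l ∪ linkBoth b h

/-- `G` is obtained from `𝒟(C)` for a comb `C` by replacing each junction of
`C` by a directed cycle of length 3 as described in the paper.  Position `k`
of the spine is replaced by the piece `S k` (a single vertex, or a directed
triangle at junctions), with `L k`, `R k`, `B k` the vertices of `S k` to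
which the left spine part, the right spine part and the branch attach, and
`t n` the tooth of branch `n`. -/
def IsTriangleComb (G : DGraph V) (teeth : Set V) : Prop :=
  ∃ (α : ℕ → ℕ) (q : ℕ → List V) (S : ℕ → DGraph V) (L R B : ℕ → V) (t : ℕ → V),
    Function.Injective α ∧
    (∀ j k, j ≠ k → (S j).verts ∩ (S k).verts = ∅) ∧
    (∀ n, (q n).Nodup) ∧
    (∀ m n, m ≠ n → ∀ v ∈ q m, v ∉ q n) ∧
    (∀ n, ∀ v ∈ q n, ∀ k, v ∉ (S k).verts) ∧
    (∀ k, L k ∈ (S k).verts ∧ R k ∈ (S k).verts ∧ B k ∈ (S k).verts) ∧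
    (∀ k, (¬ ∃ n, α n = k ∧ 1 ≤ k) → ∃ v, S k = single v) ∧
    (∀ n, 1 ≤ α n → ∃ a b c, a ≠ b ∧ b ≠ c ∧ a ≠ c ∧ S (α n) = triangle a b c) ∧
    (∀ n, 1 ≤ α n → q n ≠ [] →
      L (α n) ≠ R (α n) ∧ L (α n) ≠ B (α n) ∧ R (α n) ≠ B (α n)) ∧
    (∀ n, 1 ≤ α n → q n = [] →
      t n ∈ (S (α n)).verts ∧ L (α n) ≠ R (α n) ∧ t n ≠ L (α n) ∧ t n ≠ R (α n)) ∧
    (∀ n, q n ≠ [] → (q n).getLast? = some (t n)) ∧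
    (∀ n, α n = 0 → q n = [] → t n ∈ (S 0).verts) ∧
    G = iUnion S ∪ iUnion (fun k => linkBoth (R k) (L (k + 1))) ∪
        iUnion (fun n => branchGraph (B (α n)) (q n)) ∧
    teeth = Set.range t

/-- `G` is shaped by a comb, with set of teeth `teeth`. -/
def IsShapedByComb (G : DGraph V) (teeth : Set V) : Prop :=
  IsDComb G teeth ∨ IsTriangleComb G teeth

/-- The core of a chain of triangles: triangles `a i, b i, c i` together with
the edges `(a (i+1), a i)` and `(c i, c (i+1))`. -/
def chainCore (a b c : ℕ → V) : DGraph V :=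
  ⟨Set.range a ∪ Set.range b ∪ Set.range c,
   {e | ∃ i, e = (a i, b i) ∨ e = (b i, c i) ∨ e = (c i, a i) ∨
        e = (a (i + 1), a i) ∨ e = (c i, c (i + 1))}⟩

/-- `G` is a chain of triangles with set of teeth `teeth`. -/
def IsChainOfTriangles (G : DGraph V) (teeth : Set V) : Prop :=
  ∃ (a b c : ℕ → V) (q : ℕ → List V),
    (Function.Injective fun p : ℕ × Fin 3 => ![a, b, c] p.2 p.1) ∧
    (∀ i, (q i).Nodup ∧ (q i).head? = some (b i)) ∧
    (∀ i, ∀ v ∈ (q i).tail, ∀ j, v ≠ a j ∧ v ≠ b j ∧ v ≠ c j) ∧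
    (∀ i j, i ≠ j → ∀ v ∈ q i, v ∉ q j) ∧
    G = chainCore a b c ∪ iUnion (fun i => doubleOfList (q i)) ∧
    teeth = {v | ∃ i, (q i).getLast? = some v}

/-- `G` is a subdivided in-star with centre (root) `c` and all edges directed
towards `c`; it has infinitely many leaves and `teeth` is its set of leaves. -/
def IsSubdividedInStar (G : DGraph V) (teeth : Set V) : Prop :=
  ∃ (c : V) (q : ℕ → List V),
    (∀ n, (q n).Nodup ∧ (q n).getLast? = some c ∧ 2 ≤ (q n).length) ∧
    (∀ m n, m ≠ n → ∀ v, v ∈ q m → v ∈ q n → v = c) ∧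
    G = iUnion (fun n => ofList (q n)) ∧
    teeth = {v | ∃ n, (q n).head? = some v}

/-- `G` is a subdivided out-star. -/
def IsSubdividedOutStar (G : DGraph V) (teeth : Set V) : Prop :=
  IsSubdividedInStar G.reverse teeth

/-- `G = 𝒟(K_{1,∞})`. -/
def IsDInfiniteStar (G : DGraph V) : Prop :=
  ∃ (c : V) (g : ℕ → V), Function.Injective g ∧ (∀ n, g n ≠ c) ∧
    G = ⟨insert c (Set.range g), {e | ∃ n, e = (c, g n) ∨ e = (g n, c)}⟩

/-- `G = 𝒟(R)` for an undirected ray `R`. -/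
def IsDoubleRayGraph (G : DGraph V) : Prop :=
  ∃ f : ℕ → V, Function.Injective f ∧ G = doubleRay f

/-- `G` is a subdivision of a dominated directed ray (parallel edges being
collapsed): the ray `f`, its original vertices sitting at the positions
`α n ≥ 1`, and for each `n` a subdivided dominating edge `p n`. -/
def IsSubdivDominatedRay (G : DGraph V) : Prop :=
  (∃ (f : ℕ → V) (α : ℕ → ℕ) (p : ℕ → List V),
    Function.Injective f ∧ StrictMono α ∧ (∀ n, 1 ≤ α n) ∧
    (∀ n, (p n).Nodup ∧ (p n).head? = some (f (α n)) ∧ (p n).getLast? = some (f 0) ∧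
      2 ≤ (p n).length) ∧
    (∀ n, ∀ v ∈ internals (p n), v ∉ Set.range f) ∧
    (∀ m n, m ≠ n → ∀ v ∈ internals (p m), v ∉ p n) ∧
    G = outRay f ∪ iUnion (fun n => ofList (p n))) ∨
  (∃ (f : ℕ → V) (α : ℕ → ℕ) (p : ℕ → List V),
    Function.Injective f ∧ StrictMono α ∧ (∀ n, 1 ≤ α n) ∧
    (∀ n, (p n).Nodup ∧ (p n).head? = some (f 0) ∧ (p n).getLast? = some (f (α n)) ∧
      2 ≤ (p n).length) ∧
    (∀ n, ∀ v ∈ internals (p n), v ∉ Set.range f) ∧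
    (∀ m n, m ≠ n → ∀ v ∈ internals (p m), v ∉ p n) ∧
    G = inRay f ∪ iUnion (fun n => ofList (p n)))

section Laced

variable [DecidableEq V]

/-- The segment of the path `l` from `x` to `y` (inclusive). -/
def seg (l : List V) (x y : V) : List V :=
  (l.drop (l.idxOf x)).take (l.idxOf y + 1 - l.idxOf x)

/-- `x ≤ y` along the path `l`. -/
def leIn (l : List V) (x y : V) : Prop :=
  x ∈ l ∧ y ∈ l ∧ l.idxOf x ≤ l.idxOf y

/-- `x < y` along the path `l`. -/
def ltIn (l : List V) (x y : V) : Prop :=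
  x ∈ l ∧ y ∈ l ∧ l.idxOf x < l.idxOf y

/-- The directed paths `P` and `Q` are laced. -/
def Laced (P Q : List V) : Prop :=
  (∀ v ∈ P, v ∉ Q) ∨
  ∃ (ℓ : ℕ) (x y : ℕ → V), 1 ≤ ℓ ∧
    (∀ i, 1 ≤ i → i ≤ ℓ → leIn P (x i) (y i) ∧ leIn Q (x i) (y i)) ∧
    (∀ i, 1 ≤ i → i < ℓ → ltIn P (y i) (x (i + 1)) ∧ ltIn Q (y (i + 1)) (x i)) ∧
    (∀ i, 1 ≤ i → i ≤ ℓ → seg P (x i) (y i) = seg Q (x i) (y i)) ∧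
    (∀ i, 1 ≤ i → i < ℓ → ∀ v ∈ internals (seg Q (y (i + 1)) (x i)), v ∉ P) ∧
    (∀ v ∈ Q.take (Q.idxOf (x ℓ) + 1), v ∈ P → v = x ℓ) ∧
    (∀ v ∈ Q.drop (Q.idxOf (y 1)), v ∈ P → v = y 1)

end Laced

/-- The out-ray `f` and the in-ray `g` with common root are knit:
`x i = f (p i) = g (p' i)` and `y i = f (q i) = g (q' i)` are the shared
segments, in the orders required in the paper. -/
def Knit (f g : ℕ → V) : Prop :=
  f 0 = g 0 ∧
  ∃ p q p' q' : ℕ → ℕ,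
    (∀ i, 0 < p i ∧ p i ≤ q i ∧ q i < p (i + 1)) ∧
    (∀ i, 0 < q' i ∧ q' i ≤ p' i ∧ p' i < q' (i + 1)) ∧
    (∀ i, q i - p i = p' i - q' i) ∧
    (∀ i, ∀ k ≤ q i - p i, f (p i + k) = g (p' i - k)) ∧
    (∀ i, ∀ m, p' i < m → m < q' (i + 1) → g m ∉ Set.range f) ∧
    (∀ m, 0 < m → m < q' 0 → g m ∉ Set.range f)

section Contract

variable [DecidableEq V]

/-- The map identifying `v` with `u`. -/
def contractFun (u v : V) : V → V := fun x => if x = v then u else x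

/-- Contracting the edge `(u, v)` of `G` onto the vertex `u`. -/
def contractEdge (G : DGraph V) (u v : V) : DGraph V :=
  ⟨contractFun u v '' G.verts,
   {e | e ≠ (u, u) ∧ ∃ e' ∈ G.edges, e = (contractFun u v e'.1, contractFun u v e'.2)}⟩

end Contract

/-- The edge `(u, v)` of `G` is butterfly contractible. -/
def IsButterflyContractibleEdge (G : DGraph V) (u v : V) : Prop :=
  (u, v) ∈ G.edges ∧
  ((∀ w, (u, w) ∈ G.edges → w = v) ∨ (∀ w, (w, v) ∈ G.edges → w = u))

/-- `G` and `H` are isomorphic directed graphs. -/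
def Isom (G H : DGraph V) : Prop :=
  ∃ φ : V → V, Set.BijOn φ G.verts H.verts ∧
    ∀ u ∈ G.verts, ∀ v ∈ G.verts, ((u, v) ∈ G.edges ↔ (φ u, φ v) ∈ H.edges)

end DGraph


namespace KnitAux
variable {V : Type u}

lemma zip_tail_concat (l : List V) (y : V) (h : l ≠ []) :
    l.zip (l.tail ++ [y]) = l.zip l.tail ++ [(l.getLast h, y)] := by
  induction l with
  | nil => simp at h
  | cons a t ih =>
    cases t with
    | nil => simp
    | cons b s =>
      simp only [List.tail_cons] at *
      have := ih (by simp)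
      simp only [List.zip_cons_cons, List.getLast_cons (l := b :: s) (by simp)] at *
      rw [show (b :: s) ++ [y] = b :: (s ++ [y]) by simp, List.zip_cons_cons, this]
      simp

lemma zip_tail_append (A B : List V) (hA : A ≠ []) (hB : B ≠ []) :
    (A ++ B).zip (A ++ B).tail
      = A.zip A.tail ++ (A.getLast hA, B.head hB) :: B.zip B.tail := by
  induction A with
  | nil => simp at hA
  | cons a t ih =>
    cases t with
    | nil =>
      cases B with
      | nil => simp at hB
      | cons b s => simp
    | cons c s =>
      have := ih (by simp)
      simp only [List.cons_append, List.tail_cons] at *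
      rw [List.zip_cons_cons, this, List.zip_cons_cons]
      simp [List.getLast_cons (l := c :: s) (by simp)]

lemma zip_tail_map_range' (h : ℕ → V) (a n : ℕ) :
    (List.map h (List.range' a (n+1))).zip (List.map h (List.range' a (n+1))).tail
      = List.map (fun j => (h j, h (j+1))) (List.range' a n) := by
  induction n generalizing a with
  | zero => simp
  | succ n ih =>
    rw [show n+1+1 = (n+1)+1 from rfl, List.range'_succ (s := a) (n := n+1), List.range'_succ (s := a) (n := n),
      List.range'_succ (s := a+1) (n := n)]
    have := ih (a+1)
    rw [List.range'_succ (s := a+1) (n := n)] at this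
    simp only [List.map_cons, List.tail_cons, List.zip_cons_cons] at this ⊢
    rw [this]

lemma cycle_edges (F K : ℕ → V) (a n m : ℕ) :
    (List.map F (List.range' a (n+1)) ++ List.map K (List.range' 0 (m+1))).zip
      (((List.map F (List.range' a (n+1)) ++ List.map K (List.range' 0 (m+1))).tail)
        ++ (List.map F (List.range' a (n+1)) ++ List.map K (List.range' 0 (m+1))).take 1)
    = List.map (fun j => (F j, F (j+1))) (List.range' a n)
      ++ (F (a+n), K 0) :: (List.map (fun t => (K t, K (t+1))) (List.range' 0 m)
        ++ [(K m, F a)]) := by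
  set A := List.map F (List.range' a (n+1)) with hA
  set B := List.map K (List.range' 0 (m+1)) with hB
  have hAne : A ≠ [] := by simp [hA, List.range'_succ]
  have hBne : B ≠ [] := by simp [hB, List.range'_succ]
  have hLne : A ++ B ≠ [] := by simp [hAne]
  have htake : (A ++ B).take 1 = [F a] := by
    rw [hA, List.range'_succ]; simp
  have hgB : B.getLast hBne = K m := by
    rw [List.getLast_eq_iff_getLast?_eq_some, hB, List.getLast?_map, List.range'_concat]
    simp
  have hgL : (A ++ B).getLast hLne = K m := by
    rw [List.getLast_eq_iff_getLast?_eq_some] at hgB ⊢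
    rw [List.getLast?_append_of_ne_nil _ hBne]
    exact hgB
  have hgA : A.getLast hAne = F (a + n) := by
    rw [List.getLast_eq_iff_getLast?_eq_some, hA, List.getLast?_map, List.range'_concat]
    simp
  have hhB : B.head hBne = K 0 := by
    rw [List.head_eq_iff_head?_eq_some, hB, List.range'_succ]
    simp
  rw [htake, zip_tail_concat _ _ hLne, hgL, zip_tail_append A B hAne hBne, hgA, hhB,
    zip_tail_map_range', zip_tail_map_range']
  simp

/-- `Qf q 0 = 0`, `Qf q (i+1) = q i`. -/
def Qf (q : ℕ → ℕ) : ℕ → ℕ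
  | 0 => 0
  | (i+1) => q i

@[simp] lemma Qf_zero (q : ℕ → ℕ) : Qf q 0 = 0 := rfl
@[simp] lemma Qf_succ (q : ℕ → ℕ) (i : ℕ) : Qf q (i+1) = q i := rfl

/-- The `i`-th cycle list. -/
def cyc (f g : ℕ → V) (q q' : ℕ → ℕ) (i : ℕ) : List V :=
  List.map f (List.range' (Qf q i) (Qf q (i+1) - Qf q i)) ++
    List.map (fun t => g (Qf q' (i+1) - t)) (List.range' 0 (Qf q' (i+1) - Qf q' i))

/-- All the data of a knit pair of rays. -/
structure KnitData (f g : ℕ → V) (p q p' q' : ℕ → ℕ) : Prop where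
  hf : Function.Injective f
  hg : Function.Injective g
  h0 : f 0 = g 0
  hpq : ∀ i, 0 < p i ∧ p i ≤ q i ∧ q i < p (i+1)
  hq'c : ∀ i, 0 < q' i ∧ q' i ≤ p' i ∧ p' i < q' (i+1)
  hdiff : ∀ i, q i - p i = p' i - q' i
  heqk : ∀ i, ∀ k ≤ q i - p i, f (p i + k) = g (p' i - k)
  hmiss : ∀ i, ∀ m, p' i < m → m < q' (i+1) → g m ∉ Set.range f
  hmiss0 : ∀ m, 0 < m → m < q' 0 → g m ∉ Set.range f

namespace KnitData

variable {f g : ℕ → V} {p q p' q' : ℕ → ℕ} (H : KnitData f g p q p' q')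
include H

lemma hsum (i : ℕ) : q i + q' i = p i + p' i := by
  have h1 := H.hpq i; have h2 := H.hq'c i; have h3 := H.hdiff i; omega

lemma hqmono : StrictMono q :=
  strictMono_nat_of_lt_succ fun i =>
    lt_of_lt_of_le (H.hpq i).2.2 (H.hpq (i+1)).2.1

lemma hq'mono : StrictMono q' :=
  strictMono_nat_of_lt_succ fun i =>
    lt_of_le_of_lt (H.hq'c i).2.1 (H.hq'c i).2.2

lemma hpmono : StrictMono p :=
  strictMono_nat_of_lt_succ fun i =>
    lt_of_le_of_lt (H.hpq i).2.1 (H.hpq i).2.2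

lemma hQlt (i : ℕ) : Qf q i < Qf q (i+1) := by
  cases i with
  | zero => simpa using lt_of_lt_of_le (H.hpq 0).1 (H.hpq 0).2.1
  | succ i => simpa using H.hqmono (Nat.lt_succ_self i)

lemma hQ'lt (i : ℕ) : Qf q' i < Qf q' (i+1) := by
  cases i with
  | zero => simpa using (H.hq'c 0).1
  | succ i => simpa using H.hq'mono (Nat.lt_succ_self i)

lemma hQmono : StrictMono (Qf q) := strictMono_nat_of_lt_succ H.hQlt
lemma hQ'mono : StrictMono (Qf q') := strictMono_nat_of_lt_succ H.hQ'lt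

lemma hfq (i : ℕ) : f (q i) = g (q' i) := by
  have h1 := H.heqk i (q i - p i) le_rfl
  have h2 := H.hpq i; have h3 := H.hq'c i; have h4 := H.hdiff i
  rw [show p i + (q i - p i) = q i by omega, show p' i - (q i - p i) = q' i by omega] at h1
  exact h1

lemma hQfg (i : ℕ) : f (Qf q i) = g (Qf q' i) := by
  cases i with
  | zero => exact H.h0
  | succ i => exact H.hfq i

/-- `f j = g (q i + q' i - j)` for `p i ≤ j ≤ q i`. -/
lemma heq2 (i j : ℕ) (h1 : p i ≤ j) (h2 : j ≤ q i) : f j = g (q i + q' i - j) := by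
  have h3 := H.heqk i (j - p i) (by omega)
  have h4 := H.hpq i; have h5 := H.hq'c i; have h6 := H.hdiff i
  rw [show p i + (j - p i) = j by omega,
    show p' i - (j - p i) = q i + q' i - j by omega] at h3
  exact h3

omit H in
lemma hcov (Z : ℕ → ℕ) (h0' : Z 0 = 0) (hlt : ∀ i, Z i < Z (i+1)) (n : ℕ) :
    ∃ i, Z i ≤ n ∧ n < Z (i+1) := by
  induction n with
  | zero => exact ⟨0, by omega, by have := hlt 0; omega⟩
  | succ n ih =>
    obtain ⟨i, hi1, hi2⟩ := ih
    by_cases hc : n + 1 < Z (i+1)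
    · exact ⟨i, by omega, hc⟩
    · exact ⟨i + 1, by omega, by have := hlt (i+1); omega⟩

/-- Classification of coincidences `g m = f j`. -/
lemma hclass (m j : ℕ) (hmj : g m = f j) :
    (m = 0 ∧ j = 0) ∨
      ∃ i, q' i ≤ m ∧ m ≤ p' i ∧ p i ≤ j ∧ j ≤ q i ∧ m + j = q' i + q i := by
  by_cases hm : m = 0
  · subst hm
    refine Or.inl ⟨rfl, H.hf ?_⟩
    rw [hmj.symm, H.h0]
  · right
    obtain ⟨i, h1, h2⟩ := hcov (Qf q') rfl H.hQ'lt m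
    match i with
    | 0 =>
      exact absurd ⟨j, hmj.symm⟩ (H.hmiss0 m (by omega) (by simpa using h2))
    | Nat.succ i =>
      simp only [Qf_succ] at h1 h2
      by_cases hp : m ≤ p' i
      · have h3 := H.heqk i (p' i - m) (by have := H.hdiff i; omega)
        rw [show p' i - (p' i - m) = m by omega] at h3
        have hj : j = p i + (p' i - m) := H.hf (by rw [← hmj, ← h3])
        have h4 := H.hpq i; have h5 := H.hq'c i; have h6 := H.hdiff i
        exact ⟨i, h1, hp, by omega, by omega, by omega⟩
      · exact absurd ⟨j, hmj.symm⟩ (H.hmiss i m (by omega) h2)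

/-- Uniqueness of the `q'`-interval containing `x`. -/
lemma huniq {a b x : ℕ} (h1 : q' a ≤ x) (h2 : x < q' (a+1)) (h3 : q' b ≤ x)
    (h4 : x < q' (b+1)) : a = b := by
  rcases lt_trichotomy a b with hc | hc | hc
  · have := H.hq'mono.monotone (show a + 1 ≤ b by omega)
    omega
  · exact hc
  · have := H.hq'mono.monotone (show b + 1 ≤ a by omega)
    omega


lemma hQp (i : ℕ) : Qf q i < p i := by
  cases i with
  | zero => exact (H.hpq 0).1
  | succ i => exact (H.hpq i).2.2

lemma hQ'q (i : ℕ) : Qf q' i < q' i := by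
  cases i with
  | zero => exact (H.hq'c 0).1
  | succ i => exact H.hq'mono (Nat.lt_succ_self i)

lemma mem_cyc (i : ℕ) (v : V) :
    v ∈ cyc f g q q' i ↔
      (∃ j, Qf q i ≤ j ∧ j ≤ Qf q (i+1) ∧ v = f j) ∨
      (∃ m, Qf q' i ≤ m ∧ m ≤ Qf q' (i+1) ∧ v = g m) := by
  have hb := H.hQlt i
  have hb' := H.hQ'lt i
  have hE := H.hQfg (i+1)
  have hS := H.hQfg i
  unfold cyc
  simp only [List.mem_append, List.mem_map, List.mem_range'_1]
  constructor
  · rintro (⟨j, hj, rfl⟩ | ⟨t, ht, rfl⟩)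
    · exact Or.inl ⟨j, by omega, by omega, rfl⟩
    · exact Or.inr ⟨Qf q' (i+1) - t, by omega, by omega, rfl⟩
  · rintro (⟨j, hj1, hj2, rfl⟩ | ⟨m, hm1, hm2, rfl⟩)
    · by_cases hc : j < Qf q (i+1)
      · exact Or.inl ⟨j, ⟨hj1, by omega⟩, rfl⟩
      · refine Or.inr ⟨0, by omega, ?_⟩
        rw [show j = Qf q (i+1) by omega, hE]
        norm_num
    · by_cases hc : Qf q' i < m
      · refine Or.inr ⟨Qf q' (i+1) - m, by omega, ?_⟩
        congr 1
        omega
      · have hma : m = Qf q' i := by omega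
        subst hma
        exact Or.inl ⟨Qf q i, ⟨le_rfl, by omega⟩, hS⟩

lemma edge_cyc (i : ℕ) (e : V × V) :
    e ∈ (cyc f g q q' i).zip ((cyc f g q q' i).tail ++ (cyc f g q q' i).take 1) ↔
      (∃ j, Qf q i ≤ j ∧ j < Qf q (i+1) ∧ e = (f j, f (j+1))) ∨
      (∃ m, Qf q' i ≤ m ∧ m < Qf q' (i+1) ∧ e = (g (m+1), g m)) := by
  have hb := H.hQlt i
  have hb' := H.hQ'lt i
  have hE := H.hQfg (i+1)
  have hS := H.hQfg i
  obtain ⟨n, hn⟩ : ∃ n, Qf q (i+1) - Qf q i = n + 1 := ⟨Qf q (i+1) - Qf q i - 1, by omega⟩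
  obtain ⟨mm, hm⟩ : ∃ mm, Qf q' (i+1) - Qf q' i = mm + 1 := ⟨Qf q' (i+1) - Qf q' i - 1, by omega⟩
  have han : Qf q i + n = Qf q (i+1) - 1 := by omega
  unfold cyc
  rw [hn, hm, cycle_edges]
  simp only [List.mem_append, List.mem_cons, List.mem_map, List.mem_range'_1,
    List.not_mem_nil, or_false]
  constructor
  · rintro (⟨j, hj, rfl⟩ | rfl | ⟨t, ht, rfl⟩ | rfl)
    · exact Or.inl ⟨j, by omega, by omega, rfl⟩
    · refine Or.inl ⟨Qf q i + n, by omega, by omega, ?_⟩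
      simp only [Prod.mk.injEq, true_and]
      rw [show Qf q i + n + 1 = Qf q (i+1) by omega, hE]
      norm_num
    · refine Or.inr ⟨Qf q' (i+1) - t - 1, by omega, by omega, ?_⟩
      simp only [Prod.mk.injEq]
      constructor <;> · congr 1 <;> omega
    · refine Or.inr ⟨Qf q' i, le_rfl, by omega, ?_⟩
      simp only [Prod.mk.injEq]
      exact ⟨by congr 1 <;> omega, hS⟩
  · rintro (⟨j, hj1, hj2, rfl⟩ | ⟨m, hm1, hm2, rfl⟩)
    · by_cases hc : j < Qf q i + n
      · exact Or.inl ⟨j, ⟨hj1, by omega⟩, rfl⟩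
      · refine Or.inr (Or.inl ?_)
        have hj : j = Qf q i + n := by omega
        simp only [Prod.mk.injEq]
        refine ⟨by rw [hj], ?_⟩
        rw [show j + 1 = Qf q (i+1) by omega, hE]
        norm_num
    · by_cases hc : Qf q' i < m
      · refine Or.inr (Or.inr (Or.inl ⟨Qf q' (i+1) - m - 1, by omega, ?_⟩))
        simp only [Prod.mk.injEq]
        constructor <;> · congr 1 <;> omega
      · refine Or.inr (Or.inr (Or.inr ?_))
        have hmq : m = Qf q' i := by omega
        simp only [Prod.mk.injEq]
        constructor
        · congr 1; omega
        · rw [hmq, hS]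

lemma nodup_cyc (i : ℕ) : (cyc f g q q' i).Nodup := by
  have hb := H.hQlt i
  have hb' := H.hQ'lt i
  have hE := H.hQfg (i+1)
  unfold cyc
  rw [List.nodup_append']
  refine ⟨List.Nodup.map H.hf (List.nodup_range' ..), ?_, ?_⟩
  · refine List.Nodup.map_on ?_ (List.nodup_range' ..)
    intro t1 h1 t2 h2 hgt
    rw [List.mem_range'_1] at h1 h2
    have := H.hg hgt
    omega
  · intro v hv1 hv2
    simp only [List.mem_map, List.mem_range'_1] at hv1 hv2
    obtain ⟨j, hj, rfl⟩ := hv1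
    obtain ⟨t, ht, hgt⟩ := hv2
    set m := Qf q' (i+1) - t with hmdef
    by_cases hc : m = Qf q' (i+1)
    · rw [hc, ← hE] at hgt
      have := H.hf hgt
      omega
    · have hm1 : Qf q' i < m := by omega
      have hm2 : m < Qf q' (i+1) := by omega
      rcases H.hclass m j hgt with ⟨h01, h02⟩ | ⟨i0, c1, c2, c3, c4, c5⟩
      · omega
      · have hup : m < q' (i0+1) := lt_of_le_of_lt c2 (H.hq'c i0).2.2
        match i with
        | 0 =>
          simp only [Qf_zero, Qf_succ] at hm1 hm2
          have : ¬ (q' i0 < q' 0) := by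
            intro hcon
            have := H.hq'mono.lt_iff_lt.mp hcon
            omega
          omega
        | Nat.succ i' =>
          simp only [Qf_succ] at hm1 hm2 hj
          have : i0 = i' := H.huniq c1 hup (by omega) hm2
          subst this
          omega

lemma two_le_length_cyc (i : ℕ) : 2 ≤ (cyc f g q q' i).length := by
  have hb := H.hQlt i
  have hb' := H.hQ'lt i
  unfold cyc
  rw [List.length_append, List.length_map, List.length_map, List.length_range',
    List.length_range']
  omega


lemma snd_mem (i : ℕ) (e : V × V)
    (he : e ∈ (cyc f g q q' i).zip ((cyc f g q q' i).tail ++ (cyc f g q q' i).take 1)) :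
    e.2 ∈ cyc f g q q' i := by
  rw [H.edge_cyc] at he
  rw [H.mem_cyc]
  rcases he with ⟨j, h1, h2, rfl⟩ | ⟨m, h1, h2, rfl⟩
  · exact Or.inl ⟨j+1, by omega, by omega, rfl⟩
  · exact Or.inr ⟨m, h1, by omega, rfl⟩

lemma far_disj (j d : ℕ) (v : V) (h1 : v ∈ cyc f g q q' j)
    (h2 : v ∈ cyc f g q q' (j + d + 2)) : False := by
  rw [H.mem_cyc] at h1 h2
  rw [show Qf q (j+d+2) = q (j+d+1) from rfl, show Qf q (j+d+2+1) = q (j+d+2) from rfl,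
    show Qf q' (j+d+2) = q' (j+d+1) from rfl,
    show Qf q' (j+d+2+1) = q' (j+d+2) from rfl] at h2
  rw [show Qf q (j+1) = q j from rfl, show Qf q' (j+1) = q' j from rfl] at h1
  rcases h1 with ⟨j1, a1, a2, rfl⟩ | ⟨m1, a1, a2, rfl⟩
  · rcases h2 with ⟨j2, b1, b2, hv⟩ | ⟨m2, b1, b2, hv⟩
    · have := H.hf hv
      have := H.hqmono (show j < j + d + 1 by omega)
      omega
    · rcases H.hclass m2 j1 hv.symm with ⟨z1, z2⟩ | ⟨i0, d1, d2, d3, d4, d5⟩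
      · have := (H.hq'c (j+d+1)).1
        omega
      · have hup : m2 < q' (i0+1) := lt_of_le_of_lt d2 (H.hq'c i0).2.2
        have hge : j + d + 1 ≤ i0 := by
          by_contra hcon
          have := H.hq'mono.monotone (show i0 + 1 ≤ j + d + 1 by omega)
          omega
        have hp1 : p (j+d+1) ≤ p i0 := H.hpmono.monotone hge
        have hp2 : q (j+d) < p (j+d+1) := (H.hpq (j+d)).2.2
        have hp3 : q j ≤ q (j+d) := H.hqmono.monotone (by omega)
        omega
  · rcases h2 with ⟨j2, b1, b2, hv⟩ | ⟨m2, b1, b2, hv⟩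
    · rcases H.hclass m1 j2 hv with ⟨z1, z2⟩ | ⟨i0, d1, d2, d3, d4, d5⟩
      · have := (H.hpq (j+d+1)).1
        have := (H.hpq (j+d+1)).2.1
        omega
      · have hge : j + d + 1 ≤ i0 := by
          by_contra hcon
          have := H.hqmono.monotone (show i0 ≤ j + d by omega)
          have := H.hqmono (show j + d < j + d + 1 by omega)
          omega
        have h5 : q' (j+1) ≤ q' i0 := H.hq'mono.monotone (by omega)
        have h6 : q' j < q' (j+1) := H.hq'mono (by omega)
        omega
    · have := H.hg hv
      have := H.hq'mono.monotone (show j + 1 ≤ j + d + 1 by omega)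
      have := H.hq'mono (show j < j + 1 by omega)
      omega

lemma inter_vert_adjacent (i : ℕ) (v : V) :
    (v ∈ cyc f g q q' i ∧ v ∈ cyc f g q q' (i+1)) ↔
      ∃ j, p i ≤ j ∧ j ≤ q i ∧ v = f j := by
  have hpqi := H.hpq i
  have hpqi1 := H.hpq (i+1)
  have hq'i := H.hq'c i
  have hq'i1 := H.hq'c (i+1)
  have hsumi := H.hsum i
  have hQpi := H.hQp i
  rw [H.mem_cyc, H.mem_cyc]
  simp only [Qf_succ]
  constructor
  · rintro ⟨hv1, hv2⟩
    rcases hv1 with ⟨j1, a1, a2, rfl⟩ | ⟨m1, a1, a2, rfl⟩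
    · rcases hv2 with ⟨j2, b1, b2, hv⟩ | ⟨m2, b1, b2, hv⟩
      · have := H.hf hv
        exact ⟨j1, by omega, by omega, rfl⟩
      · rcases H.hclass m2 j1 hv.symm with ⟨z1, z2⟩ | ⟨i0, d1, d2, d3, d4, d5⟩
        · omega
        · have hup : m2 < q' (i0+1) := lt_of_le_of_lt d2 (H.hq'c i0).2.2
          by_cases hcm : m2 < q' (i+1)
          · have hii : i0 = i := H.huniq d1 hup b1 hcm
            rw [hii] at d3 d4
            exact ⟨j1, d3, d4, rfl⟩
          · have : i0 = i + 1 := H.huniq d1 hup (by omega) (by omega)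
            subst this
            omega
    · rcases hv2 with ⟨j2, b1, b2, hv⟩ | ⟨m2, b1, b2, hv⟩
      · rcases H.hclass m1 j2 hv with ⟨z1, z2⟩ | ⟨i0, d1, d2, d3, d4, d5⟩
        · omega
        · have hge : i ≤ i0 := by
            by_contra hcon
            have := H.hqmono (show i0 < i by omega)
            omega
          have hle : i0 ≤ i := by
            by_contra hcon
            have := H.hq'mono (show i < i0 by omega)
            omega
          have hii : i0 = i := by omega
          rw [hii] at d3 d4
          exact ⟨j2, d3, d4, hv⟩
      · have := H.hg hv
        have hm1 : m1 = q' i := by omega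
        exact ⟨q i, hpqi.2.1, le_rfl, by rw [hm1, ← H.hfq i]⟩
  · rintro ⟨j, h1, h2, rfl⟩
    constructor
    · exact Or.inl ⟨j, by omega, by omega, rfl⟩
    · refine Or.inr ⟨q i + q' i - j, by omega, by omega, ?_⟩
      exact H.heq2 i j h1 h2

lemma inter_edge_adjacent (i : ℕ) (e : V × V) :
    (e ∈ (cyc f g q q' i).zip ((cyc f g q q' i).tail ++ (cyc f g q q' i).take 1) ∧
      e ∈ (cyc f g q q' (i+1)).zip
        ((cyc f g q q' (i+1)).tail ++ (cyc f g q q' (i+1)).take 1)) ↔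
      ∃ j, p i ≤ j ∧ j < q i ∧ e = (f j, f (j+1)) := by
  have hpqi := H.hpq i
  have hpqi1 := H.hpq (i+1)
  have hq'i := H.hq'c i
  have hq'i1 := H.hq'c (i+1)
  have hsumi := H.hsum i
  have hQpi := H.hQp i
  rw [H.edge_cyc, H.edge_cyc]
  simp only [Qf_succ]
  constructor
  · rintro ⟨he1, he2⟩
    rcases he1 with ⟨j1, a1, a2, rfl⟩ | ⟨m1, a1, a2, rfl⟩
    · rcases he2 with ⟨j2, b1, b2, hv⟩ | ⟨m2, b1, b2, hv⟩
      · rw [Prod.mk.injEq] at hv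
        have := H.hf hv.1
        omega
      · rw [Prod.mk.injEq] at hv
        obtain ⟨hva, hvb⟩ := hv
        rcases H.hclass m2 (j1+1) hvb.symm with ⟨z1, z2⟩ | ⟨i0, d1, d2, d3, d4, d5⟩
        · omega
        · have hup : m2 < q' (i0+1) := lt_of_le_of_lt d2 (H.hq'c i0).2.2
          have hi0 : i0 = i := H.huniq d1 hup b1 b2
          rw [hi0] at d1 d2 d3 d4 d5
          rcases H.hclass (m2+1) j1 hva.symm with ⟨z1, z2⟩ | ⟨i1, t1, t2, t3, t4, t5⟩
          · omega
          · have hup1 : m2 + 1 < q' (i1+1) := lt_of_le_of_lt t2 (H.hq'c i1).2.2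
            by_cases hcm : m2 + 1 < q' (i+1)
            · have hii : i1 = i := H.huniq t1 hup1 (by omega) hcm
              rw [hii] at t3
              exact ⟨j1, t3, by omega, rfl⟩
            · have hii : i1 = i + 1 := H.huniq t1 hup1 (by omega) (by omega)
              rw [hii] at t3
              omega
    · rcases he2 with ⟨j2, b1, b2, hv⟩ | ⟨m2, b1, b2, hv⟩
      · rw [Prod.mk.injEq] at hv
        obtain ⟨hva, hvb⟩ := hv
        rcases H.hclass m1 (j2+1) hvb with ⟨z1, z2⟩ | ⟨i0, d1, d2, d3, d4, d5⟩
        · omega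
        · have hgt : i < i0 := by
            by_contra hcon
            have : q i0 ≤ q i := H.hqmono.monotone (by omega)
            omega
          have h5 : q' (i+1) ≤ q' i0 := H.hq'mono.monotone (by omega)
          have h6 := H.hq'mono (Nat.lt_succ_self i)
          omega
      · rw [Prod.mk.injEq] at hv
        have := H.hg hv.1
        omega
  · rintro ⟨j, h1, h2, rfl⟩
    refine ⟨Or.inl ⟨j, by omega, by omega, rfl⟩,
      Or.inr ⟨q i + q' i - j - 1, by omega, by omega, ?_⟩⟩
    rw [Prod.mk.injEq]
    constructor
    · rw [show q i + q' i - j - 1 + 1 = q i + q' i - j by omega]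
      exact H.heq2 i j h1 (by omega)
    · have h3 := H.heq2 i (j+1) (by omega) (by omega)
      rw [show q i + q' i - (j + 1) = q i + q' i - j - 1 by omega] at h3
      exact h3

end KnitData

lemma dgraph_ext {G₁ G₂ : DGraph V} (h1 : G₁.verts = G₂.verts)
    (h2 : G₁.edges = G₂.edges) : G₁ = G₂ := by
  cases G₁; cases G₂
  cases h1; cases h2
  rfl

lemma inter_verts (G₁ G₂ : DGraph V) : (G₁ ∩ G₂).verts = G₁.verts ∩ G₂.verts := rfl
lemma inter_edges (G₁ G₂ : DGraph V) : (G₁ ∩ G₂).edges = G₁.edges ∩ G₂.edges := rfl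
lemma cycle_verts' (l : List V) : (DGraph.cycleOfList l).verts = {v | v ∈ l} := rfl
lemma cycle_edges'' (l : List V) :
    (DGraph.cycleOfList l).edges = {e | e ∈ l.zip (l.tail ++ l.take 1)} := rfl
lemma ofList_verts (l : List V) : (DGraph.ofList l).verts = {v | v ∈ l} := rfl
lemma ofList_edges (l : List V) : (DGraph.ofList l).edges = {e | e ∈ l.zip l.tail} := rfl
lemma empty_verts : ((∅ : DGraph V)).verts = (∅ : Set V) := rfl
lemma empty_edges : ((∅ : DGraph V)).edges = (∅ : Set (V × V)) := rfl

lemma dgraph_inter_comm (G₁ G₂ : DGraph V) : G₁ ∩ G₂ = G₂ ∩ G₁ :=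
  dgraph_ext (Set.inter_comm _ _) (Set.inter_comm _ _)

namespace KnitData

variable {f g : ℕ → V} {p q p' q' : ℕ → ℕ} (H : KnitData f g p q p' q')
include H

lemma inter_adjacent (i : ℕ) :
    DGraph.cycleOfList (cyc f g q q' i) ∩ DGraph.cycleOfList (cyc f g q q' (i+1)) =
      DGraph.ofList (List.map f (List.range' (p i) (q i - p i + 1))) := by
  have hpqi := H.hpq i
  apply dgraph_ext
  · rw [inter_verts, cycle_verts', cycle_verts', ofList_verts]
    ext v
    simp only [Set.mem_inter_iff, Set.mem_setOf_eq]
    rw [H.inter_vert_adjacent i v]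
    simp only [List.mem_map, List.mem_range'_1]
    constructor
    · rintro ⟨j, h1, h2, rfl⟩
      exact ⟨j, ⟨h1, by omega⟩, rfl⟩
    · rintro ⟨j, ⟨h1, h2⟩, rfl⟩
      exact ⟨j, h1, by omega, rfl⟩
  · rw [inter_edges, cycle_edges'', cycle_edges'', ofList_edges]
    ext e
    simp only [Set.mem_inter_iff, Set.mem_setOf_eq]
    rw [H.inter_edge_adjacent i e, zip_tail_map_range']
    simp only [List.mem_map, List.mem_range'_1]
    constructor
    · rintro ⟨j, h1, h2, rfl⟩
      exact ⟨j, ⟨h1, by omega⟩, rfl⟩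
    · rintro ⟨j, ⟨h1, h2⟩, rfl⟩
      exact ⟨j, h1, by omega, rfl⟩

lemma inter_far (j d : ℕ) :
    DGraph.cycleOfList (cyc f g q q' j) ∩ DGraph.cycleOfList (cyc f g q q' (j+d+2)) =
      (∅ : DGraph V) := by
  apply dgraph_ext
  · rw [inter_verts, cycle_verts', cycle_verts', empty_verts]
    ext v
    simp only [Set.mem_inter_iff, Set.mem_setOf_eq, Set.mem_empty_iff_false, iff_false,
      not_and]
    intro hv1 hv2
    exact H.far_disj j d v hv1 hv2
  · rw [inter_edges, cycle_edges'', cycle_edges'', empty_edges]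
    ext e
    simp only [Set.mem_inter_iff, Set.mem_setOf_eq, Set.mem_empty_iff_false, iff_false,
      not_and]
    intro he1 he2
    exact H.far_disj j d e.2 (H.snd_mem j e he1) (H.snd_mem (j+d+2) e he2)

lemma union_eq :
    DGraph.iUnion (fun i => DGraph.cycleOfList (cyc f g q q' i)) =
      DGraph.outRay f ∪ DGraph.inRay g := by
  apply dgraph_ext
  · show (⋃ i, (DGraph.cycleOfList (cyc f g q q' i)).verts) =
      Set.range f ∪ Set.range g
    ext v
    simp only [Set.mem_iUnion, Set.mem_union, Set.mem_range]
    constructor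
    · rintro ⟨i, hv⟩
      rcases (H.mem_cyc i v).mp hv with ⟨j, _, _, rfl⟩ | ⟨m, _, _, rfl⟩
      · exact Or.inl ⟨j, rfl⟩
      · exact Or.inr ⟨m, rfl⟩
    · rintro (⟨n, rfl⟩ | ⟨n, rfl⟩)
      · obtain ⟨i, h1, h2⟩ := hcov (Qf q) rfl H.hQlt n
        exact ⟨i, (H.mem_cyc i _).mpr (Or.inl ⟨n, h1, by omega, rfl⟩)⟩
      · obtain ⟨i, h1, h2⟩ := hcov (Qf q') rfl H.hQ'lt n
        exact ⟨i, (H.mem_cyc i _).mpr (Or.inr ⟨n, h1, by omega, rfl⟩)⟩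
  · show (⋃ i, (DGraph.cycleOfList (cyc f g q q' i)).edges) =
      {e | ∃ n, e = (f n, f (n + 1))} ∪ {e | ∃ n, e = (g (n + 1), g n)}
    ext e
    simp only [Set.mem_iUnion, Set.mem_union, Set.mem_setOf_eq]
    constructor
    · rintro ⟨i, he⟩
      rcases (H.edge_cyc i e).mp he with ⟨j, _, _, rfl⟩ | ⟨m, _, _, rfl⟩
      · exact Or.inl ⟨j, rfl⟩
      · exact Or.inr ⟨m, rfl⟩
    · rintro (⟨n, rfl⟩ | ⟨n, rfl⟩)
      · obtain ⟨i, h1, h2⟩ := hcov (Qf q) rfl H.hQlt n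
        exact ⟨i, (H.edge_cyc i _).mpr (Or.inl ⟨n, h1, h2, rfl⟩)⟩
      · obtain ⟨i, h1, h2⟩ := hcov (Qf q') rfl H.hQ'lt n
        exact ⟨i, (H.edge_cyc i _).mpr (Or.inr ⟨n, h1, h2, rfl⟩)⟩

end KnitData

end KnitAux


/-- If `R` is an out-ray and `S` is an in-ray with common
root such that `R` and `S` are knit, then there is a sequence `(C i)` of
directed cycles such that `C j ∩ C k` is a directed path if `|j − k| = 1` and
empty otherwise, and `⋃ᵢ C i = R ∪ S`. -/
theorem knit_rays_decompose_into_cycles {V : Type u} (f g : ℕ → V)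
    (hf : Function.Injective f) (hg : Function.Injective g)
    (h : DGraph.Knit f g) :
    ∃ C : ℕ → DGraph V,
      (∀ i, DGraph.IsDirectedCycle (C i)) ∧
      (∀ j k, j ≠ k →
        ((k = j + 1 ∨ j = k + 1) →
          ∃ m : List V, m ≠ [] ∧ m.Nodup ∧ C j ∩ C k = DGraph.ofList m) ∧
        (¬(k = j + 1 ∨ j = k + 1) → C j ∩ C k = (∅ : DGraph V))) ∧
      DGraph.iUnion C = DGraph.outRay f ∪ DGraph.inRay g := by
  obtain ⟨h0, p, q, p', q', c1, c2, c3, c4, c5, c6⟩ := h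
  have H : KnitAux.KnitData f g p q p' q' := ⟨hf, hg, h0, c1, c2, c3, c4, c5, c6⟩
  refine ⟨fun i => DGraph.cycleOfList (KnitAux.cyc f g q q' i),
    fun i => ⟨_, H.nodup_cyc i, H.two_le_length_cyc i, rfl⟩, fun j k hjk => ⟨?_, ?_⟩,
    H.union_eq⟩
  · rintro (rfl | rfl)
    · exact ⟨List.map f (List.range' (p j) (q j - p j + 1)),
        by simp [List.range'_succ], List.Nodup.map hf (List.nodup_range' ..),
        H.inter_adjacent j⟩
    · refine ⟨List.map f (List.range' (p k) (q k - p k + 1)),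
        by simp [List.range'_succ], List.Nodup.map hf (List.nodup_range' ..), ?_⟩
      rw [KnitAux.dgraph_inter_comm]
      exact H.inter_adjacent k
  · intro hno
    rcases Nat.lt_or_ge j k with hlt | hge
    · obtain ⟨d, rfl⟩ : ∃ d, k = j + d + 2 := ⟨k - j - 2, by omega⟩
      exact H.inter_far j d
    · obtain ⟨d, rfl⟩ : ∃ d, j = k + d + 2 := ⟨j - k - 2, by omega⟩
      rw [KnitAux.dgraph_inter_comm]
      exact H.inter_far k d
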